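/- arXiv:math/0703241 — 2 statements merged into one kernel-verified Lean document; each statement's English description precedes it below -/
import Mathlib

section
/- Let n ∈ ℕ*, B ⊆ A^n, and let Σ be a subshift on A such that B^ω ⊆ Σ. If Σ is a factor of a subshift of finite type Γ ⊆ B^ℕ, then Σ is T1. -/
variable {A : Type*}

/-- The onesided shift on `A^ℕ`. -/
def shiftN (z : ℕ → A) : ℕ → A := fun i => z (i + 1)

/-- The twosided shift on `A^ℤ`. -/
def shiftZ (x : ℤ → A) : ℤ → A := fun i => x (i + 1)

/-- A (onesided) subshift: a closed, shift-stable set of infinite words. -/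
def IsSubshift [TopologicalSpace A] (S : Set (ℕ → A)) : Prop :=
  IsClosed S ∧ ∀ z ∈ S, shiftN z ∈ S

/-- A 2-SFT: a subshift given by a set of forbidden words of length 2. -/
def IsTwoSFT (S : Set (ℕ → A)) : Prop :=
  ∃ Fb : Set (A × A), S = {z | ∀ i : ℕ, (z i, z (i + 1)) ∉ Fb}

/-- A k-SFT: a subshift given by a set of forbidden words of length k. -/
def IsKSFT (k : ℕ) (S : Set (ℕ → A)) : Prop :=
  ∃ Fb : Set (Fin k → A), S = {z | ∀ i : ℕ, (fun j : Fin k => z (i + (j : ℕ))) ∉ Fb}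

/-- A subshift of finite type. -/
def IsSFT (S : Set (ℕ → A)) : Prop := ∃ k : ℕ, IsKSFT k S

/-- A cellular automaton: a continuous self-map of `A^ℤ` commuting with the shift. -/
def IsCA [TopologicalSpace A] (F : (ℤ → A) → (ℤ → A)) : Prop :=
  Continuous F ∧ ∀ x, F (shiftZ x) = shiftZ (F x)

/-- The trace of `F` with initial condition `x`: the 0th column of the space-time diagram. -/
def caTrace (F : (ℤ → A) → (ℤ → A)) (x : ℤ → A) : ℕ → A := fun j => F^[j] x 0

/-- The trace subshift of `F`. -/
def traceSubshift (F : (ℤ → A) → (ℤ → A)) : Set (ℕ → A) := Set.range (caTrace F)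

/-- A subshift is traceable if it is the trace subshift of some CA. -/
def Traceable [TopologicalSpace A] (S : Set (ℕ → A)) : Prop :=
  ∃ F : (ℤ → A) → (ℤ → A), IsCA F ∧ traceSubshift F = S

/-- The q-th projection of an infinite word over the alphabet `A^k`. -/
def proj {k : ℕ} (q : Fin k) (z : ℕ → (Fin k → A)) : ℕ → A := fun j => z j q

/-- `π(Γ)`: the union of all projections. -/
def projAll {k : ℕ} (Γ : Set (ℕ → (Fin k → A))) : Set (ℕ → A) :=
  ⋃ q : Fin k, proj q '' Γ

/-- A subshift `S` on `A` is T1 if there is a 2-SFT `Γ ⊆ (A^k)^ℕ` with `π₀(Γ) = π(Γ) = S`. -/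
def IsT1 (S : Set (ℕ → A)) : Prop :=
  ∃ k : ℕ, ∃ hk : 0 < k, ∃ Γ : Set (ℕ → (Fin k → A)),
    IsTwoSFT Γ ∧ proj (⟨0, hk⟩ : Fin k) '' Γ = S ∧ projAll Γ = S

/-- A onesided CA: one admitting a local rule of anchor 0. -/
def IsOnesidedCA {C : Type*} (F : (ℤ → C) → (ℤ → C)) : Prop :=
  ∃ d : ℕ, ∃ f : (Fin d → C) → C, ∀ x i, F x i = f (fun j => x (i + (j : ℕ)))

/-- `S` is the k-trace of a onesided CA on some alphabet `B ⊆ A^k`. -/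
def KTraceable (k : ℕ) (S : Set (ℕ → A)) : Prop :=
  ∃ B : Set (Fin k → A), ∃ F : (ℤ → ↥B) → (ℤ → ↥B), IsOnesidedCA F ∧
    S = ⋃ q : Fin k, (fun z : ℕ → ↥B => fun j => ((z j : Fin k → A) q)) '' Set.range (caTrace F)

/-- `S` is a factor of `Γ`: a surjective continuous shift-commuting map from `Γ` onto `S`. -/
def IsFactorOf {B : Type*} [TopologicalSpace A] [TopologicalSpace B]
    (S : Set (ℕ → A)) (Γ : Set (ℕ → B)) : Prop :=
  ∃ φ : (ℕ → B) → (ℕ → A), ContinuousOn φ Γ ∧ φ '' Γ = S ∧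
    ∀ z ∈ Γ, φ (shiftN z) = shiftN (φ z)

/-- The language of a subshift: all finite factors of its elements. -/
def lang (S : Set (ℕ → A)) : Language A :=
  {w | ∃ z ∈ S, ∃ i : ℕ, w = List.ofFn (fun j : Fin w.length => z (i + (j : ℕ)))}

/-- A transitive subshift. -/
def IsTransitiveSubshift (S : Set (ℕ → A)) : Prop :=
  ∀ u ∈ lang S, ∀ v ∈ lang S, ∃ w : List A, u ++ w ++ v ∈ lang S

/-- A T2 subshift: sofic, and including an infinite transitive subshift. -/
def IsT2 [TopologicalSpace A] (S : Set (ℕ → A)) : Prop :=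
  (lang S).IsRegular ∧ ∃ Γ ⊆ S, IsSubshift Γ ∧ Γ.Infinite ∧ IsTransitiveSubshift Γ

/-- `B^ω`: infinite concatenations of words from `B ⊆ A^k`. -/
def Bomega {k : ℕ} (B : Set (Fin k → A)) : Set (ℕ → A) :=
  {z | ∀ i : ℕ, (fun q : Fin k => z (i * k + (q : ℕ))) ∈ B}

/-- A T3 subshift: T0 via a map `φ`, together with a periodic word `w ∉ φ(A)^*`. -/
def IsT3 (S : Set (ℕ → A)) : Prop :=
  ∃ φ : A → A, (∀ a : A, (fun j => φ^[j] a) ∈ S) ∧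
    ∃ w : List A, w ≠ [] ∧ (∃ a ∈ w, a ∉ Set.range φ) ∧
      ∃ z ∈ S, (∀ j : ℕ, z (j + w.length) = z j) ∧ ∀ i : Fin w.length, z (i : ℕ) = w.get i

lemma shiftN_iterate (z : ℕ → A) (c : ℕ) : shiftN^[c] z = fun i => z (i + c) := by
  induction c with
  | zero => simp
  | succ c ih =>
    rw [Function.iterate_succ_apply', ih]
    funext i
    simp only [shiftN]
    ring_nf

/-- the anchor word: `(b^4 b')^∞`. -/
def zetaFn {n : ℕ} (hn : 0 < n) (b b' : Fin n → A) : ℕ → A := fun y =>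
  if y % (5*n) < 4*n then b ⟨y % n, Nat.mod_lt _ hn⟩ else b' ⟨y % n, Nat.mod_lt _ hn⟩

lemma zetaFn_mod {n : ℕ} (hn : 0 < n) (b b' : Fin n → A) (y y' : ℕ)
    (h : y % (5*n) = y' % (5*n)) : zetaFn hn b b' y = zetaFn hn b b' y' := by
  have hnn : n ∣ 5*n := ⟨5, by ring⟩
  have h2 : y % n = y' % n := by
    rw [← Nat.mod_mod_of_dvd y hnn, ← Nat.mod_mod_of_dvd y' hnn, h]
  unfold zetaFn
  have e1 : (⟨y % n, Nat.mod_lt _ hn⟩ : Fin n) = ⟨y' % n, Nat.mod_lt _ hn⟩ := by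
    simp only [Fin.mk.injEq]; exact h2
  rw [e1, h]

lemma zetaFn_mem_Bomega {n : ℕ} (hn : 0 < n) {B : Set (Fin n → A)} {b b' : Fin n → A}
    (hb : b ∈ B) (hb' : b' ∈ B) : zetaFn hn b b' ∈ Bomega B := by
  intro i
  have key : ∀ q : Fin n, i * n + (q : ℕ) = (5*n) * (i/5) + ((i % 5) * n + q) := by
    intro q
    have : i = 5 * (i/5) + i % 5 := (Nat.div_add_mod i 5).symm
    calc i * n + (q:ℕ) = (5 * (i/5) + i % 5) * n + q := by rw [← this]
    _ = (5*n) * (i/5) + ((i % 5) * n + q) := by ring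
  have hlt : ∀ q : Fin n, (i % 5) * n + (q:ℕ) < 5 * n := by
    intro q
    have h1 : i % 5 < 5 := Nat.mod_lt _ (by norm_num)
    have := q.isLt
    calc (i % 5) * n + (q:ℕ) < (i % 5) * n + n := by omega
    _ = (i % 5 + 1) * n := by ring
    _ ≤ 5 * n := Nat.mul_le_mul_right _ (by omega)
  have hmod : ∀ q : Fin n, (i * n + (q:ℕ)) % (5*n) = (i % 5) * n + q := by
    intro q
    rw [key q, Nat.mul_add_mod]
    exact Nat.mod_eq_of_lt (hlt q)
  have hmodn : ∀ q : Fin n, (i * n + (q:ℕ)) % n = q := by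
    intro q
    rw [show i*n + (q:ℕ) = (q:ℕ) + i*n by ring, Nat.add_mul_mod_self_right]
    exact Nat.mod_eq_of_lt q.isLt
  have hfin : ∀ q : Fin n, (⟨(i * n + (q:ℕ)) % n, Nat.mod_lt _ hn⟩ : Fin n) = q := by
    intro q; exact Fin.ext (hmodn q)
  by_cases h5 : i % 5 < 4
  · have : (fun q : Fin n => zetaFn hn b b' (i * n + (q:ℕ))) = b := by
      funext q
      unfold zetaFn
      rw [hfin q, hmod q]
      have hc : (i % 5) * n + (q:ℕ) < 4 * n := by
        have := q.isLt
        calc (i % 5) * n + (q:ℕ) < (i % 5 + 1) * n := by ring_nf; omega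
        _ ≤ 4 * n := Nat.mul_le_mul_right _ (by omega)
      simp [hc]
    rw [this]; exact hb
  · have h5' : i % 5 = 4 := by have := Nat.mod_lt i (show 0 < 5 by norm_num); omega
    have : (fun q : Fin n => zetaFn hn b b' (i * n + (q:ℕ))) = b' := by
      funext q
      unfold zetaFn
      rw [hfin q, hmod q, h5']
      have hc : ¬ (4 * n + (q:ℕ) < 4 * n) := by omega
      simp [hc]
    rw [this]; exact hb'

lemma zetaFn_inj {n : ℕ} (hn : 0 < n) (b b' : Fin n → A) (hne : b ≠ b')
    (a a' : ℕ) (ha : a < 5*n) (ha' : a' < 5*n)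
    (hyp : ∀ s, s < 5*n → zetaFn hn b b' (a + s) = zetaFn hn b b' (a' + s)) :
    a = a' := by
  set ζ := zetaFn hn b b' with hζ
  obtain ⟨q₀, hq₀⟩ := Function.ne_iff.mp hne
  have h5n : 0 < 5*n := by omega
  -- extend hypothesis to all s
  have hAll : ∀ s, ζ (a + s) = ζ (a' + s) := by
    intro s
    have e1 : ζ (a + s) = ζ (a + s % (5*n)) :=
      zetaFn_mod hn b b' _ _ (Nat.add_mod_mod a s (5*n)).symm
    have e2 : ζ (a' + s) = ζ (a' + s % (5*n)) :=
      zetaFn_mod hn b b' _ _ (Nat.add_mod_mod a' s (5*n)).symm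
    rw [e1, e2]
    exact hyp _ (Nat.mod_lt _ h5n)
  -- reduce to the case a ≤ a'
  clear hyp
  have main : ∀ c c' : ℕ, c < 5*n → c' < 5*n → c ≤ c' →
      (∀ s, ζ (c + s) = ζ (c' + s)) → c = c' := by
    intro c c' hc hc' hle hCC
    set D := c' - c with hD
    by_cases hD0 : D = 0
    · omega
    -- global D-invariance
    have hper : ∀ y, ζ (y + 5*n) = ζ y :=
      fun y => zetaFn_mod hn b b' _ _ (Nat.add_mod_right y (5*n))
    have H' : ∀ y, ζ y = ζ (y + D) := by
      intro y
      have h1 : ζ y = ζ (y + 5*n) := (hper y).symm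
      have h2 : y + 5*n = c + (y + 5*n - c) := by omega
      have h3 : c' + (y + 5*n - c) = y + D + 5*n := by omega
      rw [h1, h2, hCC (y + 5*n - c), h3, hper]
    -- difference set
    have hDset1 : ζ (3*n + (q₀:ℕ)) ≠ ζ (3*n + (q₀:ℕ) + n) := by
      have hq := q₀.isLt
      have e1 : ζ (3*n + (q₀:ℕ)) = b q₀ := by
        show zetaFn hn b b' _ = _
        unfold zetaFn
        have m1 : (3*n + (q₀:ℕ)) % (5*n) = 3*n + q₀ := Nat.mod_eq_of_lt (by omega)
        have m2 : (3*n + (q₀:ℕ)) % n = q₀ := by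
          rw [show 3*n+(q₀:ℕ) = (q₀:ℕ) + 3*n by ring, Nat.add_mul_mod_self_right]
          exact Nat.mod_eq_of_lt hq
        have ef : (⟨(3*n + (q₀:ℕ)) % n, Nat.mod_lt _ hn⟩ : Fin n) = q₀ := Fin.ext m2
        rw [ef, m1, if_pos (by omega)]
      have e2 : ζ (3*n + (q₀:ℕ) + n) = b' q₀ := by
        show zetaFn hn b b' _ = _
        unfold zetaFn
        have m1 : (3*n + (q₀:ℕ) + n) % (5*n) = 4*n + q₀ := by
          rw [show 3*n + (q₀:ℕ) + n = 4*n + q₀ by ring]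
          exact Nat.mod_eq_of_lt (by omega)
        have m2 : (3*n + (q₀:ℕ) + n) % n = q₀ := by
          rw [show 3*n+(q₀:ℕ)+n = (q₀:ℕ) + 4*n by ring, Nat.add_mul_mod_self_right]
          exact Nat.mod_eq_of_lt hq
        have ef : (⟨(3*n + (q₀:ℕ) + n) % n, Nat.mod_lt _ hn⟩ : Fin n) = q₀ := Fin.ext m2
        rw [ef, m1, if_neg (by omega)]
      rw [e1, e2]; exact hq₀
    have hstepD : ∀ y, ζ y ≠ ζ (y + n) → ζ (y + D) ≠ ζ (y + D + n) := by
      intro y hy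
      rw [← H' y, show y + D + n = (y + n) + D by ring, ← H' (y+n)]
      exact hy
    have hhigh : ∀ y, ζ y ≠ ζ (y + n) → 3*n ≤ y % (5*n) := by
      intro y hy
      by_contra hlow
      push_neg at hlow
      apply hy
      have hy5 := Nat.mod_lt y (y := 5*n) h5n
      have e1 : ζ y = ζ (y % (5*n)) := zetaFn_mod hn b b' _ _ (Nat.mod_mod_of_dvd y (dvd_refl (5*n))).symm
      have e2 : ζ (y + n) = ζ (y % (5*n) + n) :=
        zetaFn_mod hn b b' _ _ (Nat.mod_add_mod y (5*n) n).symm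
      rw [e1, e2]
      show zetaFn hn b b' _ = zetaFn hn b b' _
      unfold zetaFn
      set w := y % (5*n)
      have m1 : w % (5*n) = w := Nat.mod_eq_of_lt hy5
      have m2 : (w + n) % (5*n) = w + n := Nat.mod_eq_of_lt (by omega)
      have m3 : (w + n) % n = w % n := Nat.add_mod_right w n
      have ef : (⟨(w+n) % n, Nat.mod_lt _ hn⟩ : Fin n) = ⟨w % n, Nat.mod_lt _ hn⟩ := Fin.ext m3
      rw [ef, m1, m2, if_pos (by omega), if_pos (by omega)]
    -- the orbit
    set Y : ℕ → ℕ := fun i => 3*n + (q₀:ℕ) + i*D with hY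
    have hDsetY : ∀ i, ζ (Y i) ≠ ζ (Y i + n) := by
      intro i
      induction i with
      | zero =>
        have hY0 : Y 0 = 3*n + (q₀:ℕ) := by simp [hY]
        rw [hY0]; exact hDset1
      | succ i ih =>
        have : Y (i+1) = Y i + D := by simp only [hY]; ring
        rw [this]
        exact hstepD _ ih
    have hrY : ∀ i, 3*n ≤ Y i % (5*n) := fun i => hhigh _ (hDsetY i)
    have hrlt : ∀ i, Y i % (5*n) < 5*n := fun i => Nat.mod_lt _ h5n
    have hDlt : D < 5*n := by omega
    have hD1 : 1 ≤ D := by omega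
    exfalso
    have hstepmod : ∀ i, Y (i+1) % (5*n) = (Y i % (5*n) + D) % (5*n) := by
      intro i
      have : Y (i+1) = Y i + D := by simp only [hY]; ring
      rw [this]
      exact (Nat.mod_add_mod (Y i) (5*n) D).symm
    by_cases hD3 : D ≤ 3*n
    · -- never wraps; strictly increasing forever: contradiction
      have hstep : ∀ i, Y (i+1) % (5*n) = Y i % (5*n) + D := by
        intro i
        rw [hstepmod i]
        by_cases h : Y i % (5*n) + D < 5*n
        · exact Nat.mod_eq_of_lt h
        · exfalso
          have hw : (Y i % (5*n) + D) % (5*n) = Y i % (5*n) + D - 5*n := by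
            rw [Nat.mod_eq_sub_mod (by omega)]
            exact Nat.mod_eq_of_lt (by have := hrlt i; omega)
          have := hrY (i+1)
          rw [hstepmod i, hw] at this
          have := hrlt i
          omega
      have hlin : ∀ i, Y i % (5*n) = Y 0 % (5*n) + i * D := by
        intro i
        induction i with
        | zero => simp
        | succ i ih => rw [hstep i, ih]; ring
      have h1 := hlin (5*n)
      have h2 : 5*n ≤ 5*n*D := Nat.le_mul_of_pos_right _ (by omega)
      have := hrlt (5*n)
      omega
    · -- always wraps; strictly decreasing forever: contradiction
      push_neg at hD3
      have hstep : ∀ i, Y (i+1) % (5*n) + (5*n - D) = Y i % (5*n) := by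
        intro i
        rw [hstepmod i]
        have h5 : 5*n ≤ Y i % (5*n) + D := by have := hrY i; omega
        have hw : (Y i % (5*n) + D) % (5*n) = Y i % (5*n) + D - 5*n := by
          rw [Nat.mod_eq_sub_mod h5]
          exact Nat.mod_eq_of_lt (by have := hrlt i; omega)
        rw [hw]
        have := hrY i
        omega
      have hlin : ∀ i, Y i % (5*n) + i * (5*n - D) = Y 0 % (5*n) := by
        intro i
        induction i with
        | zero => simp
        | succ i ih => rw [← ih, ← hstep i]; ring
      have h1 := hlin (Y 0 % (5*n) + 1)
      have h2 : Y 0 % (5*n) + 1 ≤ (Y 0 % (5*n) + 1) * (5*n - D) :=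
        Nat.le_mul_of_pos_right _ (by omega)
      omega
  rcases le_total a a' with h | h
  · exact main a a' ha ha' h hAll
  · exact (main a' a ha' ha h (fun s => (hAll s).symm)).symm

/-- Extraction of a one-sided local rule for a continuous shift-commuting map on a
closed shift-stable subset of a compact one-sided shift space. -/
lemma exists_local_rule {C : Type*} [Finite C] [TopologicalSpace C] [DiscreteTopology C]
    [TopologicalSpace A] [DiscreteTopology A] [Nonempty A]
    (Γ : Set (ℕ → C)) (hcl : IsClosed Γ) (hst : ∀ z ∈ Γ, shiftN z ∈ Γ)
    (φ : (ℕ → C) → (ℕ → A)) (hφ : ContinuousOn φ Γ)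
    (hcomm : ∀ z ∈ Γ, φ (shiftN z) = shiftN (φ z)) :
    ∃ r : ℕ, ∃ f : (Fin (r+1) → C) → A,
      ∀ z ∈ Γ, ∀ j, φ z j = f (fun o => z (j + (o : ℕ))) := by
  -- iterated shifts stay in Γ and φ commutes with iterates
  have hstI : ∀ c, ∀ z ∈ Γ, shiftN^[c] z ∈ Γ := by
    intro c
    induction c with
    | zero => intro z hz; simpa using hz
    | succ c ih =>
      intro z hz
      rw [Function.iterate_succ_apply']
      exact hst _ (ih z hz)
  have hcommI : ∀ c, ∀ z ∈ Γ, φ (shiftN^[c] z) = shiftN^[c] (φ z) := by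
    intro c
    induction c with
    | zero => intro z hz; simp
    | succ c ih =>
      intro z hz
      rw [Function.iterate_succ_apply', Function.iterate_succ_apply',
        hcomm _ (hstI c z hz), ih z hz]
  -- step 1 : uniform radius
  have step1 : ∃ r : ℕ, ∀ z ∈ Γ, ∀ z' ∈ Γ, (∀ i ≤ r, z i = z' i) → φ z 0 = φ z' 0 := by
    by_contra hcon
    push_neg at hcon
    choose u hu v hv hagree hne using hcon
    have hcomp : IsCompact Γ := hcl.isCompact
    obtain ⟨w, hwΓ, ψ, hψmono, hψtend⟩ := hcomp.tendsto_subseq hu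
    -- v ∘ ψ also tends to w
    have hutend : Filter.Tendsto (fun m => u (ψ m)) Filter.atTop (nhds w) := hψtend
    have hvtend : Filter.Tendsto (fun m => v (ψ m)) Filter.atTop (nhds w) := by
      rw [tendsto_pi_nhds] at hutend ⊢
      intro i
      refine Filter.Tendsto.congr' ?_ (hutend i)
      rw [Filter.eventuallyEq_iff_exists_mem]
      refine ⟨{m | i ≤ m}, Filter.mem_atTop i, fun m hm => ?_⟩
      exact hagree (ψ m) i (le_trans hm (hψmono.le_apply))
    have hφw : Filter.Tendsto φ (nhdsWithin w Γ) (nhds (φ w)) :=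
      hφ.continuousWithinAt hwΓ
    have key : ∀ (s : ℕ → ℕ → C), (∀ m, s m ∈ Γ) →
        Filter.Tendsto s Filter.atTop (nhds w) →
        ∀ᶠ m in Filter.atTop, φ (s m) 0 = φ w 0 := by
      intro s hsΓ hstend
      have h1 : Filter.Tendsto s Filter.atTop (nhdsWithin w Γ) := by
        rw [tendsto_nhdsWithin_iff]
        exact ⟨hstend, Filter.Eventually.of_forall hsΓ⟩
      have h2 : Filter.Tendsto (fun m => φ (s m)) Filter.atTop (nhds (φ w)) :=
        hφw.comp h1
      have h3 : Filter.Tendsto (fun m => φ (s m) 0) Filter.atTop (nhds (φ w 0)) :=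
        ((continuous_apply 0).tendsto _).comp h2
      rw [nhds_discrete, Filter.tendsto_pure] at h3
      exact h3
    have hu0 := key _ (fun m => hu (ψ m)) hutend
    have hv0 := key _ (fun m => hv (ψ m)) hvtend
    obtain ⟨m, hm1, hm2⟩ := (hu0.and hv0).exists
    exact hne (ψ m) (hm1.trans hm2.symm)
  -- step 2 : define the local rule via choice
  classical
  obtain ⟨r, hr⟩ := step1
  refine ⟨r, fun uu =>
    if h : ∃ z, z ∈ Γ ∧ ∀ o : Fin (r+1), z (o : ℕ) = uu o then φ h.choose 0
    else Classical.arbitrary A, ?_⟩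
  intro z hz j
  set uu : Fin (r+1) → C := fun o => z (j + (o : ℕ)) with huu
  have hwit : ∃ zz, zz ∈ Γ ∧ ∀ o : Fin (r+1), zz (o : ℕ) = uu o := by
    refine ⟨shiftN^[j] z, hstI j z hz, fun o => ?_⟩
    rw [shiftN_iterate]
    simp only [huu]
    ring_nf
  beta_reduce
  rw [dif_pos hwit]
  obtain ⟨hzzΓ, hzzval⟩ := hwit.choose_spec
  have h1 : φ z j = φ (shiftN^[j] z) 0 := by
    rw [hcommI j z hz, shiftN_iterate]
    simp
  rw [h1]
  apply hr _ (hstI j z hz) _ hzzΓ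
  intro i hi
  have h2 : (shiftN^[j] z) i = z (i + j) := by rw [shiftN_iterate]
  have h3 : hwit.choose i = uu ⟨i, by omega⟩ := hzzval ⟨i, by omega⟩
  rw [h2, h3]
  simp only [huu]
  ring_nf

/-- width of the certificate alphabet: 1 output row, `5n` anchor rows, `n` streams
of `m+2n` shifted copies each. -/
def kv (n m : ℕ) : ℕ := 1 + 5*n + n*(m + 2*n)

def outC {n m : ℕ} (c : Fin (kv n m) → A) : A := c ⟨0, by unfold kv; omega⟩

def ancC {n m : ℕ} (hn : 0 < n) (c : Fin (kv n m) → A) (s : ℕ) : A :=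
  c ⟨1 + s % (5*n), by have := Nat.mod_lt s (show 0 < 5*n by omega); unfold kv; omega⟩

def datC {n m : ℕ} (hn : 0 < n) (c : Fin (kv n m) → A) (t s : ℕ) : A :=
  c ⟨1 + 5*n + (t % n)*(m + 2*n) + s % (m + 2*n), by
    have h1 : t % n < n := Nat.mod_lt _ hn
    have h2 : s % (m+2*n) < m + 2*n := Nat.mod_lt _ (by omega)
    have h3 : (t % n) * (m+2*n) + s % (m+2*n) < n * (m+2*n) := by
      calc (t % n) * (m+2*n) + s % (m+2*n) < (t % n) * (m+2*n) + (m+2*n) := by omega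
      _ = (t % n + 1) * (m+2*n) := by ring
      _ ≤ n * (m+2*n) := Nat.mul_le_mul_right _ (by omega)
    unfold kv; omega⟩

def mkCol (n m : ℕ) (o : A) (af : ℕ → A) (df : ℕ → ℕ → A) : Fin (kv n m) → A := fun i =>
  if i.val = 0 then o
  else if i.val < 1 + 5*n then af (i.val - 1)
  else df ((i.val - 1 - 5*n)/(m + 2*n)) ((i.val - 1 - 5*n) % (m + 2*n))

lemma outC_mkCol {n m : ℕ} (o : A) (af : ℕ → A) (df : ℕ → ℕ → A) :
    outC (mkCol n m o af df) = o := by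
  unfold outC mkCol
  simp

lemma ancC_mkCol {n m : ℕ} (hn : 0 < n) (o : A) (af : ℕ → A) (df : ℕ → ℕ → A)
    (s : ℕ) (hs : s < 5*n) : ancC hn (mkCol n m o af df) s = af s := by
  unfold ancC mkCol
  simp only [Nat.mod_eq_of_lt hs]
  rw [if_neg (by omega), if_pos (by omega)]
  congr 1
  omega

lemma datC_mkCol {n m : ℕ} (hn : 0 < n) (o : A) (af : ℕ → A) (df : ℕ → ℕ → A)
    (t s : ℕ) (ht : t < n) (hs : s < m + 2*n) :
    datC hn (mkCol n m o af df) t s = df t s := by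
  unfold datC mkCol
  simp only [Nat.mod_eq_of_lt ht, Nat.mod_eq_of_lt hs]
  rw [if_neg (by omega), if_neg (by omega)]
  have h3 : 1 + 5*n + t*(m+2*n) + s - 1 - 5*n = t*(m+2*n) + s := by omega
  rw [h3]
  have h4 : (t*(m+2*n) + s)/(m+2*n) = t := by
    rw [mul_comm, Nat.mul_add_div (by omega), Nat.div_eq_of_lt hs]
    omega
  have h5 : (t*(m+2*n) + s) % (m+2*n) = s := by
    rw [mul_comm, Nat.mul_add_mod]
    exact Nat.mod_eq_of_lt hs
  rw [h4, h5]

/-- The allowed transitions of the certificate 2-SFT. -/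
def Allowed {n : ℕ} (hn : 0 < n) (m k' r : ℕ) (hk' : k' ≤ m) (hr : r + 1 ≤ m)
    (B : Set (Fin n → A)) (ζ : ℕ → A) (Fb' : Set (Fin k' → ↥B)) (f : (Fin (r+1) → ↥B) → A)
    (c c' : Fin (kv n m) → A) : Prop :=
  ∃ a, a < 5*n ∧
    (∀ s, s < 5*n → ancC hn c s = ζ (a + s)) ∧
    (∀ s, s < 5*n → ancC hn c' s = ζ (a + 1 + s)) ∧
    (∀ t, t < n → ∀ s, s + 1 < m + 2*n → datC hn c' t s = datC hn c t (s+1)) ∧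
    (∀ t, t < n → a % n = 0 → (fun q : Fin n => datC hn c t (q : ℕ)) ∈ B) ∧
    (∀ t, t < n → ∃ e, e ∈ B ∧ ∀ i (hi : i < (n - a % n) % n),
        datC hn c t i = e ⟨n - (n - a % n) % n + i, by
          have := Nat.mod_lt (n - a % n) hn; omega⟩) ∧
    (∀ d : Fin m → ↥B,
      (∀ o : Fin m, ∀ q : Fin n,
        (d o : Fin n → A) q =
          datC hn c ((a + (o:ℕ)) % n) ((o:ℕ) + n - ((a + (o:ℕ)) % n) + (q:ℕ))) →
      ((fun jj : Fin k' => d ⟨jj.1, lt_of_lt_of_le jj.2 hk'⟩) ∉ Fb' ∧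
        outC c = f (fun o : Fin (r+1) => d ⟨o.1, lt_of_lt_of_le o.2 hr⟩)))


/-- If `B ⊆ A^n` (`n ≥ 1`), `S` is a subshift with `B^ω ⊆ S`, and `S` is a
factor of an SFT `Γ` on the alphabet `B`, then `S` is T1. -/
theorem stmt8 [Fintype A] [TopologicalSpace A] [DiscreteTopology A]
    (hA : 2 ≤ Fintype.card A) (n : ℕ) (hn : 0 < n) (B : Set (Fin n → A))
    (S : Set (ℕ → A)) (hS : IsSubshift S) (hBS : Bomega B ⊆ S)
    (Γ : Set (ℕ → ↥B)) (hΓ : IsSFT Γ) (hfac : IsFactorOf S Γ) :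
    IsT1 S := by
  classical
  obtain ⟨φ, hφc, hφim, hφcomm⟩ := hfac
  obtain ⟨k', Fb', hΓrep⟩ := hΓ
  haveI hAne : Nonempty A := Fintype.card_pos_iff.mp (by omega)
  -- S is stable under iterated shifts
  have hSiter : ∀ c, ∀ z ∈ S, shiftN^[c] z ∈ S := by
    intro c
    induction c with
    | zero => intro z hz; simpa using hz
    | succ c ih =>
      intro z hz
      rw [Function.iterate_succ_apply']
      exact hS.2 _ (ih z hz)
  by_cases hB2 : ∃ b ∈ B, ∃ b' ∈ B, b ≠ b'
  case neg =>
    -- degenerate case : B has at most one element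
    push_neg at hB2
    have hsub : ∀ x y : ↥B, x = y := by
      rintro ⟨x, hx⟩ ⟨y, hy⟩
      exact Subtype.ext (hB2 x hx y hy)
    by_cases hΓe : Γ = ∅
    · have hSe : S = ∅ := by rw [← hφim, hΓe, Set.image_empty]
      refine ⟨1, one_pos, {z | ∀ i, (z i, z (i+1)) ∉ (Set.univ : Set ((Fin 1 → A) × (Fin 1 → A)))},
        ⟨Set.univ, rfl⟩, ?_, ?_⟩
      · have he : {z : ℕ → Fin 1 → A | ∀ i, (z i, z (i+1)) ∉ (Set.univ : Set ((Fin 1 → A) × (Fin 1 → A)))} = ∅ := by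
          ext z; simp
        rw [he, Set.image_empty, hSe]
      · have he : {z : ℕ → Fin 1 → A | ∀ i, (z i, z (i+1)) ∉ (Set.univ : Set ((Fin 1 → A) × (Fin 1 → A)))} = ∅ := by
          ext z; simp
        rw [projAll, he, hSe]
        simp
    · obtain ⟨z₀, hz₀⟩ := Set.nonempty_iff_ne_empty.mpr hΓe
      have hΓs : Γ = {z₀} := by
        apply subset_antisymm
        · intro z _
          have : z = z₀ := funext fun i => hsub _ _
          simp [this]
        · simpa using hz₀
      set y := φ z₀ with hy
      have hSy : S = {y} := by rw [← hφim, hΓs, Set.image_singleton]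
      have hshift : shiftN y = y := by
        have h1 : shiftN z₀ = z₀ := funext fun i => hsub _ _
        rw [hy, ← hφcomm z₀ hz₀, h1]
      have hyconst : ∀ j, y j = y 0 := by
        intro j
        induction j with
        | zero => rfl
        | succ j ih =>
          have : y (j+1) = y j := congrFun hshift j
          rw [this, ih]
      set c₀ : Fin 1 → A := fun _ => y 0 with hc₀
      set Fb : Set ((Fin 1 → A) × (Fin 1 → A)) := {p | p ≠ (c₀, c₀)} with hFb
      refine ⟨1, one_pos, {z | ∀ i, (z i, z (i+1)) ∉ Fb}, ⟨Fb, rfl⟩, ?_, ?_⟩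
      all_goals {
        have he : {z : ℕ → Fin 1 → A | ∀ i, (z i, z (i+1)) ∉ Fb} = {fun _ => c₀} := by
          ext z
          constructor
          · intro hz
            have : ∀ i, z i = c₀ := by
              intro i
              have h2 := hz i
              simp only [hFb, Set.mem_setOf_eq, not_not] at h2
              exact (Prod.mk.injEq _ _ _ _ ▸ h2).1
            exact funext this
          · intro hz
            rw [Set.mem_singleton_iff] at hz
            intro i
            simp [hz, hFb]
        have him : proj (⟨0, one_pos⟩ : Fin 1) '' {fun _ => c₀} = S := by
          rw [Set.image_singleton, hSy]
          have : proj (⟨0, one_pos⟩ : Fin 1) (fun _ => c₀) = y := by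
            funext j
            simp only [proj, hc₀]
            exact (hyconst j).symm
          rw [this]
        first
        | (rw [he]; exact him)
        | (rw [projAll, he]
           ext w
           simp only [Set.mem_iUnion]
           constructor
           · rintro ⟨q, hq⟩
             have : q = ⟨0, one_pos⟩ := Subsingleton.elim _ _
             rw [this] at hq
             rw [← him]; exact hq
           · intro hw
             exact ⟨⟨0, one_pos⟩, him ▸ hw⟩)
      }
  case pos =>
  obtain ⟨b, hbB, b', hb'B, hbb'⟩ := hB2
  -- Γ is closed and shift-stable
  have hΓclosed : IsClosed Γ := by
    rw [hΓrep]
    have he : {z : ℕ → ↥B | ∀ i, (fun j : Fin k' => z (i + (j:ℕ))) ∉ Fb'} =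
        ⋂ i : ℕ, (fun (z : ℕ → ↥B) (j : Fin k') => z (i + (j:ℕ))) ⁻¹' (Fb'ᶜ) := by
      ext z
      simp [Set.mem_iInter]
    rw [he]
    exact isClosed_iInter fun i =>
      IsClosed.preimage (continuous_pi fun j => continuous_apply _) (isClosed_discrete _)
  have hΓstable : ∀ z ∈ Γ, shiftN z ∈ Γ := by
    intro z hz
    rw [hΓrep] at hz ⊢
    intro i
    have h1 := hz (i+1)
    have h2 : (fun j : Fin k' => shiftN z (i + (j:ℕ))) = fun j : Fin k' => z (i + 1 + (j:ℕ)) := by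
      funext j
      simp only [shiftN]
      congr 1
      omega
    rw [h2]
    exact h1
  have hΓiter : ∀ c, ∀ z ∈ Γ, shiftN^[c] z ∈ Γ := by
    intro c
    induction c with
    | zero => intro z hz; simpa using hz
    | succ c ih =>
      intro z hz
      rw [Function.iterate_succ_apply']
      exact hΓstable _ (ih z hz)
  obtain ⟨r, f, hf⟩ := exists_local_rule Γ hΓclosed hΓstable φ hφc hφcomm
  set m := max k' (r+1) with hm
  have hk'm : k' ≤ m := le_max_left _ _
  have hrm : r + 1 ≤ m := le_max_right _ _
  clear_value m
  set ζ := zetaFn hn b b' with hζdef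
  set Fb : Set ((Fin (kv n m) → A) × (Fin (kv n m) → A)) :=
    {p | ¬ Allowed hn m k' r hk'm hrm B ζ Fb' f p.1 p.2} with hFbdef
  set Γ' : Set (ℕ → Fin (kv n m) → A) := {x | ∀ i, (x i, x (i+1)) ∉ Fb} with hΓ'def
  have hmem : ∀ x, x ∈ Γ' ↔ ∀ i, Allowed hn m k' r hk'm hrm B ζ Fb' f (x i) (x (i+1)) := by
    intro x
    simp only [hΓ'def, Set.mem_setOf_eq, hFbdef, not_not]
  have hk0 : (0:ℕ) < kv n m := by unfold kv; omega
  have hmod5' : ∀ i : ℕ, (i % (5*n)) % n = i % n := fun i => Nat.mod_mod_of_dvd i ⟨5, by ring⟩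
  have hdvd5' : (0:ℕ) < 5*n := by omega
  -- KEY1 : every row of every element of Γ' belongs to S
  have KEY1 : ∀ x ∈ Γ', ∀ q : Fin (kv n m), (fun j => x j q) ∈ S := by
    intro x hx
    rw [hmem] at hx
    simp only [Allowed] at hx
    choose a halt hA1 hA2 hD1 hD2 hD3 hD4 using hx
    set G := a 0 with hGdef
    -- the anchor forces the phase counter
    have ha_rec : ∀ j, a (j+1) = (a j + 1) % (5*n) := by
      intro j
      apply zetaFn_inj hn b b' hbb' _ _ (halt (j+1)) (Nat.mod_lt _ hdvd5')
      intro s hs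
      have h1 := hA1 (j+1) s hs
      have h2 := hA2 j s hs
      rw [hζdef] at h1 h2
      rw [← h1, h2]
      exact zetaFn_mod hn b b' _ _ (Nat.mod_add_mod (a j + 1) (5*n) s).symm
    have ha_val : ∀ j, a j = (G + j) % (5*n) := by
      intro j
      induction j with
      | zero => simpa using (Nat.mod_eq_of_lt (halt 0)).symm
      | succ j ih =>
        rw [ha_rec j, ih, Nat.mod_add_mod]
        congr 1 <;> omega
    have ha_modn : ∀ j, a j % n = (G + j) % n := by
      intro j
      rw [ha_val j, hmod5']
    -- the master data streams
    set U : ℕ → ℕ → A := fun t i => datC hn (x i) t 0 with hUdef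
    have hU : ∀ t, t < n → ∀ s, s < m + 2*n → ∀ j, datC hn (x j) t s = U t (j + s) := by
      intro t ht s
      induction s with
      | zero =>
        intro _ j
        simp [hUdef]
      | succ s ih =>
        intro hs j
        have h1 := hD1 j t ht s hs
        have h2 := ih (by omega) (j+1)
        rw [← h1, h2]
        congr 1
        omega
    -- aligned blocks of the streams belong to B
    have Fact1 : ∀ t, t < n → ∀ π, (G + π) % n = 0 →
        (fun q : Fin n => U t (π + (q:ℕ))) ∈ B := by
      intro t ht π hπ
      have h0 : a π % n = 0 := by rw [ha_modn π]; exact hπ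
      have h1 := hD2 π t ht h0
      have h2 : (fun q : Fin n => U t (π + (q:ℕ))) = fun q : Fin n => datC hn (x π) t (q:ℕ) := by
        funext q
        exact (hU t ht q (by have := q.isLt; omega) π).symm
      rw [h2]
      exact h1
    have hparse : ∀ l : ℕ, (G + (l + n - (G + l) % n)) % n = 0 := by
      intro l
      have h1 := Nat.div_add_mod (G + l) n
      have h2 : (G + l) % n < n := Nat.mod_lt _ hn
      have h3 : G + (l + n - (G + l) % n) = n*((G + l)/n) + n := by omega
      rw [h3, show n*((G+l)/n) + n = n*((G+l)/n + 1) by ring, Nat.mul_mod_right]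
    have hZmem : ∀ l, (fun q : Fin n => U ((G + l) % n) (l + n - (G + l) % n + (q:ℕ))) ∈ B := by
      intro l
      exact Fact1 ((G+l) % n) (Nat.mod_lt _ hn) (l + n - (G + l) % n) (hparse l)
    set Z' : ℕ → ↥B := fun l =>
      ⟨fun q : Fin n => U ((G + l) % n) (l + n - (G + l) % n + (q:ℕ)), hZmem l⟩ with hZdef
    -- the decoded data matches the hypothesis of the D4 condition
    have hdhyp : ∀ j, ∀ o : Fin m, ∀ q : Fin n,
        ((Z' (j + (o:ℕ)) : Fin n → A)) q =
          datC hn (x j) ((a j + (o:ℕ)) % n) ((o:ℕ) + n - ((a j + (o:ℕ)) % n) + (q:ℕ)) := by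
      intro j o q
      have hρ : (a j + (o:ℕ)) % n = (G + (j + (o:ℕ))) % n := by
        rw [Nat.add_mod, ha_modn j, ← Nat.add_mod]
        congr 1
        ring
      have hρlt : (a j + (o:ℕ)) % n < n := Nat.mod_lt _ hn
      have ho := o.isLt
      have hq := q.isLt
      rw [hU ((a j + (o:ℕ)) % n) hρlt ((o:ℕ) + n - ((a j + (o:ℕ)) % n) + (q:ℕ)) (by omega) j]
      show U ((G + (j + (o:ℕ))) % n) ((j + (o:ℕ)) + n - (G + (j + (o:ℕ))) % n + (q:ℕ)) = _
      rw [hρ]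
      congr 1
      have := Nat.mod_le (G + (j + (o:ℕ))) n
      have h2 : (G + (j + (o:ℕ))) % n < n := Nat.mod_lt _ hn
      omega
    -- the decoded configuration belongs to Γ
    have hZΓ : Z' ∈ Γ := by
      rw [hΓrep]
      intro i
      exact (hD4 i (fun o : Fin m => Z' (i + (o:ℕ))) (hdhyp i)).1
    have hout2 : ∀ j, outC (x j) = φ Z' j := by
      intro j
      have h1 := (hD4 j (fun o : Fin m => Z' (j + (o:ℕ))) (hdhyp j)).2
      rw [hf Z' hZΓ j]
      exact h1
    -- now classify the rows
    intro q
    have hq : (q:ℕ) < 1 + 5*n + n*(m + 2*n) := q.isLt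
    by_cases hq0 : q.val = 0
    · have hqe : q = (⟨0, hk0⟩ : Fin (kv n m)) := Fin.ext hq0
      have he : (fun j => x j q) = φ Z' := by
        funext j
        rw [hqe]
        exact hout2 j
      rw [he, ← hφim]
      exact ⟨Z', hZΓ, rfl⟩
    · by_cases hq5 : q.val < 1 + 5*n
      · -- anchor row
        set s := q.val - 1 with hsdef
        have hs : s < 5*n := by omega
        have he : (fun j => x j q) = shiftN^[G + s] ζ := by
          rw [shiftN_iterate]
          funext j
          have h1 : x j q = ancC hn (x j) s := by
            unfold ancC
            congr 1
            exact Fin.ext (by simp [Nat.mod_eq_of_lt hs]; omega)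
          rw [h1, hA1 j s hs, ha_val j, hζdef]
          apply zetaFn_mod
          rw [Nat.mod_add_mod]
          congr 1
          ring
        rw [he]
        exact hSiter _ _ (hBS (hζdef ▸ zetaFn_mem_Bomega hn hbB hb'B))
      · -- data row
        obtain ⟨w, hwdef⟩ : ∃ w, w = (q:ℕ) - 1 - 5*n := ⟨_, rfl⟩
        have hw : w < n*(m + 2*n) := by omega
        obtain ⟨t, htdef⟩ : ∃ t, t = w / (m + 2*n) := ⟨_, rfl⟩
        obtain ⟨sd, hsddef⟩ : ∃ sd, sd = w % (m + 2*n) := ⟨_, rfl⟩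
        have hmn : 0 < m + 2*n := by omega
        have ht : t < n := by
          rw [htdef]
          apply Nat.div_lt_of_lt_mul
          have hcm : n*(m + 2*n) = (m + 2*n)*n := Nat.mul_comm _ _
          rw [← hcm]
          exact hw
        have hsd : sd < m + 2*n := by rw [hsddef]; exact Nat.mod_lt _ hmn
        have hrow : ∀ j, x j q = U t (j + sd) := by
          intro j
          have h1 : x j q = datC hn (x j) t sd := by
            unfold datC
            congr 1
            apply Fin.ext
            simp only [Nat.mod_eq_of_lt ht, Nat.mod_eq_of_lt hsd]
            show (q:ℕ) = 1 + 5*n + t * (m + 2*n) + sd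
            have h2 := Nat.div_add_mod w (m + 2*n)
            have h4 : t * (m + 2*n) = (m + 2*n) * (w / (m + 2*n)) := by rw [htdef]; ring
            omega
          rw [h1, hU t ht sd hsd j]
        -- the prefix block from condition D3
        obtain ⟨e, heB, hpre⟩ := hD3 0 t ht
        set c0 := (n - G % n) % n with hc0def
        have hc0n : c0 < n := Nat.mod_lt _ hn
        have hprefix : ∀ i', (hi' : i' < c0) → U t i' = e ⟨n - c0 + i', by omega⟩ := by
          intro i' hi'
          have h1 := hU t ht i' (by omega) 0
          rw [zero_add] at h1
          rw [← h1]
          exact hpre i' hi'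
        set V : ℕ → A := fun v => if h : v < n then e ⟨v, h⟩ else U t (v - (n - c0)) with hVdef
        have hGc0 : (G % n + c0) % n = 0 := by
          by_cases hg : G % n = 0
          · have h1 : c0 = 0 := by rw [hc0def, hg, Nat.sub_zero, Nat.mod_self]
            rw [h1, hg]
            simp
          · have h2 : G % n < n := Nat.mod_lt _ hn
            have h1 : c0 = n - G % n := by
              rw [hc0def]
              exact Nat.mod_eq_of_lt (by omega)
            rw [h1, show G % n + (n - G % n) = n by omega, Nat.mod_self]
        have hVB : V ∈ Bomega B := by
          intro i
          match i with
          | 0 =>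
            have he2 : (fun q : Fin n => V (0 * n + (q:ℕ))) = e := by
              funext qq
              have h1 : 0 * n + (qq:ℕ) = (qq:ℕ) := by omega
              rw [h1, hVdef]
              simp only [qq.isLt, dif_pos]
            rw [he2]
            exact heB
          | (i+1) =>
            have hπ : (G + (n*i + c0)) % n = 0 := by
              have h1 := Nat.div_add_mod G n
              have h3 : G + (n*i + c0) = n*(G/n) + n*i + (G % n + c0) := by omega
              have h4 : n*(G/n) + n*i + (G % n + c0) = n*(G/n + i) + (G % n + c0) := by ring
              rw [h3, h4, Nat.add_mod, Nat.mul_mod_right, hGc0]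
              simp
            have he2 : (fun qq : Fin n => V ((i+1) * n + (qq:ℕ))) =
                fun qq : Fin n => U t (n*i + c0 + (qq:ℕ)) := by
              funext qq
              have hmul : (i+1)*n = n*i + n := by ring
              have h1 : ¬ ((i+1) * n + (qq:ℕ) < n) := by omega
              rw [hVdef]
              simp only [h1, dif_neg, not_false_iff]
              congr 1
              omega
            rw [he2]
            exact Fact1 t ht (n*i + c0) hπ
        have hVshift : ∀ v, V (v + (n - c0)) = U t v := by
          intro v
          by_cases hv : v < c0
          · have h1 : v + (n - c0) < n := by omega
            rw [hVdef]
            simp only [h1, dif_pos]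
            rw [hprefix v hv]
            congr 1
            refine Fin.ext ?_
            show v + (n - c0) = n - c0 + v
            omega
          · have h1 : ¬ (v + (n - c0) < n) := by omega
            rw [hVdef]
            simp only [h1, dif_neg, not_false_iff]
            congr 1
            omega
        have he : (fun j => x j q) = shiftN^[sd + (n - c0)] V := by
          rw [shiftN_iterate]
          funext j
          rw [hrow j, ← hVshift (j + sd)]
          congr 1
          omega
        rw [he]
        exact hSiter _ _ (hBS hVB)
  have hmod5 : ∀ i : ℕ, (i % (5*n)) % n = i % n := fun i => Nat.mod_mod_of_dvd i ⟨5, by ring⟩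
  have hdvd5 : (0:ℕ) < 5*n := by omega
  -- KEY3 : every φ-image arises as the 0-th row of an element of Γ'
  have KEY3 : ∀ z ∈ Γ, ∃ x ∈ Γ', (fun j => x j (⟨0, hk0⟩ : Fin (kv n m))) = φ z := by
    intro z hz
    have hzmem : ∀ i, (fun jj : Fin k' => z (i + (jj:ℕ))) ∉ Fb' := by
      rw [hΓrep] at hz; exact hz
    set blockOf : ℕ → ℕ → (Fin n → A) :=
      fun t p => if p = 0 then b else ((z ((p-1)*n + t) : Fin n → A)) with hblockOf
    have hblockB : ∀ t p, blockOf t p ∈ B := by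
      intro t p
      simp only [hblockOf]
      split
      · exact hbB
      · exact (z _).2
    set Uw : ℕ → ℕ → A := fun t v => blockOf t (v / n) ⟨v % n, Nat.mod_lt _ hn⟩ with hUwdef
    have hUweval : ∀ t p q (hq : q < n), Uw t (n*p + q) = blockOf t p ⟨q, hq⟩ := by
      intro t p q hq
      simp only [hUwdef]
      have h1 : (n*p + q)/n = p := by rw [Nat.mul_add_div hn, Nat.div_eq_of_lt hq]; omega
      have h2 : (n*p + q)%n = q := by rw [Nat.mul_add_mod]; exact Nat.mod_eq_of_lt hq
      have e : (⟨(n*p + q) % n, Nat.mod_lt _ hn⟩ : Fin n) = ⟨q, hq⟩ := Fin.ext h2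
      rw [e, h1]
    set x : ℕ → Fin (kv n m) → A :=
      fun j => mkCol n m (φ z j) (fun s => ζ (j + s)) (fun t s => Uw t (j + s)) with hxdef
    have hout : ∀ j, outC (x j) = φ z j := fun j => outC_mkCol _ _ _
    have hanc : ∀ j s, s < 5*n → ancC hn (x j) s = ζ (j + s) :=
      fun j s hs => ancC_mkCol hn _ _ _ s hs
    have hdat : ∀ j t s, t < n → s < m + 2*n → datC hn (x j) t s = Uw t (j + s) :=
      fun j t s ht hs => datC_mkCol hn _ _ _ t s ht hs
    refine ⟨x, ?_, ?_⟩
    · rw [hmem]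
      intro i
      refine ⟨i % (5*n), Nat.mod_lt _ hdvd5, ?_, ?_, ?_, ?_, ?_, ?_⟩
      · -- A1
        intro s hs
        rw [hanc i s hs, hζdef]
        exact zetaFn_mod hn b b' _ _ (Nat.mod_add_mod i (5*n) s).symm
      · -- A2
        intro s hs
        rw [hanc (i+1) s hs, hζdef]
        apply zetaFn_mod hn b b' _ _
        have h1 : i % (5*n) + 1 + s = i % (5*n) + (1 + s) := by ring
        have h2 : i + 1 + s = i + (1 + s) := by ring
        rw [h1, h2, Nat.mod_add_mod]
      · -- D1
        intro t ht s hs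
        rw [hdat (i+1) t s ht (by omega), hdat i t (s+1) ht hs]
        congr 1
        omega
      · -- D2
        intro t ht ha0
        rw [hmod5 i] at ha0
        have hidiv : i = n*(i/n) := by have := Nat.div_add_mod i n; omega
        have he : (fun q : Fin n => datC hn (x i) t (q:ℕ)) = blockOf t (i/n) := by
          funext q
          have hq := q.isLt
          rw [hdat i t q ht (by omega)]
          have h3 : i + (q:ℕ) = n*(i/n) + (q:ℕ) := by omega
          rw [h3, hUweval t (i/n) q hq]
        rw [he]
        exact hblockB t (i/n)
      · -- D3
        intro t ht
        refine ⟨blockOf t (i/n), hblockB t (i/n), ?_⟩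
        intro i' hi'
        have hρ : i % n < n := Nat.mod_lt _ hn
        by_cases hρ0 : i % n = 0
        · exfalso
          have e3 : (n - i % (5*n) % n) % n = 0 := by
            rw [hmod5 i, hρ0]
            simp
          omega
        · have e3 : (n - i % (5*n) % n) % n = n - i % n := by
            rw [hmod5 i]
            exact Nat.mod_eq_of_lt (by omega)
          have hii : i + i' = n*(i/n) + (i % n + i') := by
            have := Nat.div_add_mod i n; omega
          rw [hdat i t i' ht (by omega), hii, hUweval t (i/n) (i % n + i') (by omega)]
          congr 1
          exact Fin.ext (show i % n + i' = n - (n - i % (5*n) % n) % n + i' by omega)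
      · -- D4
        intro d hd
        have hdz : ∀ o : Fin m, d o = z (i + (o:ℕ)) := by
          intro o
          apply Subtype.ext
          funext q
          have h1 := hd o q
          have ho := o.isLt
          have hq := q.isLt
          have hρ' : (i % (5*n) + (o:ℕ)) % n = (i + (o:ℕ)) % n := by
            rw [Nat.add_mod, hmod5, ← Nat.add_mod]
          rw [hρ'] at h1
          have hρlt : (i + (o:ℕ)) % n < n := Nat.mod_lt _ hn
          have hsb : (o:ℕ) + n - ((i + (o:ℕ)) % n) + (q:ℕ) < m + 2*n := by omega
          rw [hdat i ((i + (o:ℕ)) % n) _ hρlt hsb] at h1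
          have hmul : n*((i + (o:ℕ))/n + 1) = n*((i + (o:ℕ))/n) + n := by ring
          have harith : i + ((o:ℕ) + n - ((i + (o:ℕ)) % n) + (q:ℕ)) =
              n*((i + (o:ℕ))/n + 1) + (q:ℕ) := by
            have := Nat.div_add_mod (i + (o:ℕ)) n
            omega
          rw [harith, hUweval _ _ _ hq] at h1
          have hblk : blockOf ((i + (o:ℕ)) % n) ((i + (o:ℕ))/n + 1) ⟨(q:ℕ), hq⟩ =
              (z (i + (o:ℕ)) : Fin n → A) ⟨(q:ℕ), hq⟩ := by
            simp only [hblockOf]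
            rw [if_neg (Nat.succ_ne_zero _)]
            have he2 : ((i + (o:ℕ))/n + 1 - 1)*n + (i + (o:ℕ)) % n = i + (o:ℕ) := by
              have h5 := Nat.div_add_mod (i + (o:ℕ)) n
              have h6 : ((i + (o:ℕ))/n + 1 - 1)*n = n*((i + (o:ℕ))/n) := by
                rw [Nat.add_sub_cancel]
                exact Nat.mul_comm _ _
              omega
            rw [he2]
          rw [hblk] at h1
          exact h1
        constructor
        · have he : (fun jj : Fin k' => d ⟨jj.1, lt_of_lt_of_le jj.2 hk'm⟩) =
              fun jj : Fin k' => z (i + (jj:ℕ)) := by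
            funext jj
            rw [hdz ⟨jj.1, lt_of_lt_of_le jj.2 hk'm⟩]
          rw [he]
          exact hzmem i
        · rw [hout i, hf z hz i]
          congr 1
          funext o
          rw [hdz ⟨o.1, lt_of_lt_of_le o.2 hrm⟩]
    · funext j
      have : x j (⟨0, hk0⟩ : Fin (kv n m)) = outC (x j) := rfl
      rw [this, hout j]
  have hproj0 : proj (⟨0, hk0⟩ : Fin (kv n m)) '' Γ' = S := by
    apply subset_antisymm
    · rintro _ ⟨x, hx, rfl⟩
      exact KEY1 x hx _
    · intro y hy
      rw [← hφim] at hy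
      obtain ⟨z, hz, rfl⟩ := hy
      obtain ⟨x, hx, hxeq⟩ := KEY3 z hz
      exact ⟨x, hx, hxeq⟩
  refine ⟨kv n m, hk0, Γ', ⟨Fb, rfl⟩, hproj0, ?_⟩
  apply subset_antisymm
  · intro w hw
    rw [projAll, Set.mem_iUnion] at hw
    obtain ⟨q, x, hx, rfl⟩ := hw
    exact KEY1 x hx q
  · intro y hy
    rw [projAll, Set.mem_iUnion]
    exact ⟨⟨0, hk0⟩, hproj0.symm ▸ hy⟩
end

section
/- Let n ∈ ℕ* and B ⊆ A^n with |B| ≥ 2. Then the full shift (B^ℕ, σ) is a factor of some subshift of finite type Ψ on the alphabet A^{4n}, such that every projection of Ψ lies in the shift orbit of B^ω; i.e., π(Ψ) ⊆ ⋃_{q∈ℕ} σ^q(B^ω) ⊆ A^ℕ. -/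
variable {A : Type*}

-- ===================== auxiliary development for stmt12 =====================


private def xw (n : ℕ) (hn : 0 < n) (u v : Fin n → A) : ℕ → A :=
  fun t => (if (t / n) % 3 = 0 then u else v) ⟨t % n, Nat.mod_lt _ hn⟩

private lemma shiftN_iter (m : ℕ) (z : ℕ → A) : shiftN^[m] z = fun j => z (j + m) := by
  induction m generalizing z with
  | zero => simp
  | succ k ih =>
    rw [Function.iterate_succ_apply, ih]
    funext j
    show z (j + k + 1) = z (j + (k + 1))
    ring_nf

/-- The local admissibility condition for windows of width `n+2`. -/
private def GoodW (n : ℕ) (hn : 0 < n) (u v : Fin n → A) (B : Set (Fin n → A))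
    (W : Fin (n + 2) → Fin (4 * n) → A) : Prop :=
  ∃ t : ℕ,
    (∀ r : Fin (n + 2), ∀ q : Fin (3 * n),
      W r ⟨(q : ℕ), by have := q.isLt; omega⟩ = xw n hn u v (t + (r : ℕ) + (q : ℕ))) ∧
    (∀ q : Fin n, ∃ b ∈ B, ∀ r : ℕ, ∀ _ : r < n - (t + (q : ℕ)) % n,
      W ⟨r, by omega⟩ ⟨3 * n + (q : ℕ), by have := q.isLt; omega⟩ =
        b ⟨(t + (q : ℕ)) % n + r, by have h := Nat.mod_lt (t + (q : ℕ)) hn; omega⟩)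

/-- The SFT. -/
private def PsiSet (n : ℕ) (hn : 0 < n) (u v : Fin n → A) (B : Set (Fin n → A)) :
    Set (ℕ → Fin (4 * n) → A) :=
  {ψ | ∀ i : ℕ, GoodW n hn u v B (fun r : Fin (n + 2) => ψ (i + (r : ℕ)))}

private lemma PsiSet_isSFT (n : ℕ) (hn : 0 < n) (u v : Fin n → A) (B : Set (Fin n → A)) :
    IsSFT (PsiSet n hn u v B) := by
  refine ⟨n + 2, {W | ¬ GoodW n hn u v B W}, ?_⟩
  ext ψ
  simp only [PsiSet, Set.mem_setOf_eq, Set.mem_compl_iff, not_not]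

-- The decoding local rule.
open Classical in
private noncomputable def decF (n : ℕ) (hn : 0 < n) (u v : Fin n → A) (B : Set (Fin n → A))
    (hu : u ∈ B) (W : Fin (n + 2) → Fin (4 * n) → A) : ↥B :=
  if h : ∃ t : ℕ, ∀ q : Fin (3 * n),
      W 0 ⟨(q : ℕ), by have := q.isLt; omega⟩ = xw n hn u v (t + (q : ℕ)) then
    if hb : (fun r : Fin n => W ⟨(r : ℕ), by have := r.isLt; omega⟩
        ⟨3 * n + (n - h.choose % n) % n,
          by have := Nat.mod_lt (n - h.choose % n) hn; omega⟩) ∈ B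
    then ⟨_, hb⟩ else ⟨u, hu⟩
  else ⟨u, hu⟩

/-- The factor map. -/
private noncomputable def phiF (n : ℕ) (hn : 0 < n) (u v : Fin n → A) (B : Set (Fin n → A))
    (hu : u ∈ B) : (ℕ → Fin (4 * n) → A) → (ℕ → ↥B) :=
  fun ψ j => decF n hn u v B hu (fun r : Fin (n + 2) => ψ (j + (r : ℕ)))

/-- Data words used in the witness. -/
private def wdata (n : ℕ) (hn : 0 < n) (u : Fin n → A) (B : Set (Fin n → A))
    (z : ℕ → ↥B) (q : ℕ) : ℕ → A :=
  fun p => (if q ≤ n * (p / n) then ((z (n * (p / n) - q) : Fin n → A)) else u)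
    ⟨p % n, Nat.mod_lt _ hn⟩

/-- The witness configuration for surjectivity. -/
private def witness (n : ℕ) (hn : 0 < n) (u v : Fin n → A) (B : Set (Fin n → A))
    (z : ℕ → ↥B) : ℕ → Fin (4 * n) → A :=
  fun i a => if (a : ℕ) < 3 * n then xw n hn u v (i + (a : ℕ))
    else wdata n hn u B z ((a : ℕ) - 3 * n) (i + ((a : ℕ) - 3 * n))

section AuxStmt12core


private lemma per_sub {x : ℕ → A} {a c : ℕ} (ha : ∀ t, x (t + a) = x t)
    (hc : ∀ t, x (t + c) = x t) : ∀ t, x (t + (c - a)) = x t := by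
  intro t
  rcases le_or_gt a c with h | h
  · have h1 := ha (t + (c - a))
    have : t + (c - a) + a = t + c := by omega
    rw [this] at h1
    rw [← h1, hc]
  · have : c - a = 0 := by omega
    simp [this]

private lemma per_mul {x : ℕ → A} {a : ℕ} (ha : ∀ t, x (t + a) = x t) :
    ∀ m t, x (t + a * m) = x t := by
  intro m
  induction m with
  | zero => simp
  | succ k ih =>
    intro t
    have : t + a * (k + 1) = (t + a * k) + a := by ring
    rw [this, ha, ih]

private lemma per_sub_mul {x : ℕ → A} {a c : ℕ} (ha : ∀ t, x (t + a) = x t)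
    (hc : ∀ t, x (t + c) = x t) : ∀ k t, x (t + (c - a * k)) = x t := by
  intro k
  induction k with
  | zero => simpa using hc
  | succ m ih =>
    have he : c - a * (m + 1) = (c - a * m) - a := by rw [Nat.mul_succ]; omega
    rw [he]
    exact per_sub ha ih

private lemma per_modp {x : ℕ → A} {a c : ℕ} (ha : ∀ t, x (t + a) = x t)
    (hc : ∀ t, x (t + c) = x t) : ∀ t, x (t + c % a) = x t := by
  have hd := Nat.mod_add_div c a
  have : c % a = c - a * (c / a) := by omega
  rw [this]
  exact per_sub_mul ha hc (c / a)

private lemma per_gcd {x : ℕ → A} : ∀ a b : ℕ, (∀ t, x (t + a) = x t) →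
    (∀ t, x (t + b) = x t) → ∀ t, x (t + Nat.gcd a b) = x t := by
  intro a
  induction a using Nat.strong_induction_on with
  | _ a ih =>
    intro b ha hb t
    rcases Nat.eq_zero_or_pos a with rfl | hpos
    · simpa using hb t
    · rw [Nat.gcd_rec]
      exact ih (b % a) (Nat.mod_lt _ hpos) a (per_modp ha hb) ha t

private lemma per_val_mod {x : ℕ → A} {p : ℕ}
    (h : ∀ t, x (t + p) = x t) : ∀ t, x t = x (t % p) := by
  intro t
  conv_lhs => rw [← Nat.mod_add_div t p]
  exact per_mul h (t / p) (t % p)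

private lemma per_add_red {x : ℕ → A} {p : ℕ}
    (h : ∀ t, x (t + p) = x t) : ∀ t c, x (t + c) = x (t % p + c) := by
  intro t c
  conv_lhs => rw [← Nat.mod_add_div t p]
  rw [show t % p + p * (t / p) + c = (t % p + c) + p * (t / p) by ring]
  exact per_mul h _ _

private lemma exists_rep (p r N : ℕ) (hp : 0 < p) (hr : r < p) :
    ∃ m, N ≤ r + p * m ∧ r + p * m < N + p := by
  refine ⟨(N + p - 1 - r) / p, ?_, ?_⟩ <;>
  · have h1 := Nat.div_add_mod (N + p - 1 - r) p
    have h2 := Nat.mod_lt (N + p - 1 - r) hp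
    omega

variable {n : ℕ} (hn : 0 < n) (u v : Fin n → A)

private lemma xw_congr {t s : ℕ} (hd : (t / n) % 3 = (s / n) % 3) (hm : t % n = s % n) :
    xw n hn u v t = xw n hn u v s := by
  unfold xw
  have h2 : (⟨t % n, Nat.mod_lt _ hn⟩ : Fin n) = ⟨s % n, Nat.mod_lt _ hn⟩ := Fin.ext hm
  rw [hd, h2]

private lemma xw_block (i r : ℕ) (hr : r < n) :
    xw n hn u v (i * n + r) = (if i % 3 = 0 then u else v) ⟨r, hr⟩ := by
  have h1 : (i * n + r) / n = i := by
    rw [Nat.add_comm, Nat.add_mul_div_right _ _ hn, Nat.div_eq_of_lt hr]; omega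
  have h2 : (i * n + r) % n = r := by
    rw [Nat.add_comm, Nat.add_mul_mod_self_right, Nat.mod_eq_of_lt hr]
  unfold xw
  have h3 : (⟨(i * n + r) % n, Nat.mod_lt _ hn⟩ : Fin n) = ⟨r, hr⟩ := Fin.ext h2
  rw [h1, h3]

private lemma xw_period : ∀ t, xw n hn u v (t + 3 * n) = xw n hn u v t := by
  intro t
  apply xw_congr
  · rw [Nat.add_mul_div_right _ _ hn]
    omega
  · simp [Nat.add_mul_mod_self_right]

private lemma eq_of_period_dvd {p : ℕ} (hdvd : p ∣ n)
    (hper : ∀ t, xw n hn u v (t + p) = xw n hn u v t) : u = v := by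
  obtain ⟨m, hm⟩ := hdvd
  funext r
  have h0 : xw n hn u v (0 * n + (r : ℕ)) = u ⟨(r : ℕ), r.isLt⟩ := by
    rw [xw_block hn u v 0 r r.isLt]; norm_num
  have h1 : xw n hn u v (1 * n + (r : ℕ)) = v ⟨(r : ℕ), r.isLt⟩ := by
    rw [xw_block hn u v 1 r r.isLt]; norm_num
  have hpm := per_mul hper m (0 * n + (r : ℕ))
  have hm' : p * m = n := hm.symm
  have he : 0 * n + (r : ℕ) + p * m = 1 * n + (r : ℕ) := by omega
  rw [he, h1, h0] at hpm
  have : u r = v r := by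
    have hu : (⟨(r : ℕ), r.isLt⟩ : Fin n) = r := rfl
    rw [hu] at hpm h0
    exact (hpm).symm ▸ rfl
  exact this

private lemma no_small_period (huv : u ≠ v) {δ : ℕ} (hδ : 0 < δ) (hlt : δ < 3 * n)
    (hper : ∀ t, xw n hn u v (t + δ) = xw n hn u v t) : False := by
  set x := xw n hn u v with hx
  have hp3 : ∀ t, x (t + 3 * n) = x t := xw_period hn u v
  set g := Nat.gcd δ (3 * n) with hg
  have hpg : ∀ t, x (t + g) = x t := per_gcd δ (3 * n) hper hp3
  have hgd : g ∣ 3 * n := Nat.gcd_dvd_right _ _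
  have hgδ : g ∣ δ := Nat.gcd_dvd_left _ _
  have hgpos : 0 < g := Nat.gcd_pos_of_pos_left _ hδ
  have hglt : g < 3 * n := lt_of_le_of_lt (Nat.le_of_dvd hδ hgδ) hlt
  obtain ⟨k, hk⟩ := hgd
  have hk2 : 2 ≤ k := by
    rcases k with _ | _ | k
    · simp at hk; omega
    · simp at hk; omega
    · omega
  have REL : ∀ i, i < n → x (n + i) = x (2 * n + i) := by
    intro i hi
    have e1 : x (1 * n + i) = v ⟨i, hi⟩ := by
      rw [hx, xw_block hn u v 1 i hi]; norm_num
    have e2 : x (2 * n + i) = v ⟨i, hi⟩ := by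
      rw [hx, xw_block hn u v 2 i hi]; norm_num
    rw [show n + i = 1 * n + i by ring, e1, e2]
  by_cases hdvd : g ∣ n
  · exact huv (eq_of_period_dvd hn u v hdvd hpg)
  · have h3k : ¬ (3 ∣ k) := by
      rintro ⟨k3, hk3⟩
      refine hdvd ⟨k3, ?_⟩
      have h33 : 3 * n = 3 * (g * k3) := by rw [hk, hk3]; ring
      exact Nat.eq_of_mul_eq_mul_left (by norm_num) h33
    have h3g : 3 ∣ g := by
      have hp3' : Nat.Prime 3 := Nat.prime_three
      have hd : 3 ∣ g * k := ⟨n, by omega⟩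
      rcases (Nat.Prime.dvd_mul hp3').1 hd with h | h
      · exact h
      · exact absurd h h3k
    obtain ⟨e, he⟩ := h3g
    have hepos : 0 < e := by omega
    have hne : n = e * k := by
      have h33 : 3 * n = 3 * (e * k) := by rw [hk, he]; ring
      exact Nat.eq_of_mul_eq_mul_left (by norm_num) h33
    have hpe3 : ∀ t, x (t + 3 * e) = x t := by
      intro t; have := hpg t; rwa [he] at this
    have h3epos : 0 < 3 * e := by omega
    have hper_e : ∀ t, x (t + e) = x t := by
      rcases eq_or_ne k 2 with rfl | hk2'
      · -- k = 2 : n = 2e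
        have hn2 : n = e * 2 := hne
        have step1 : ∀ i, i < n → x (e + i) = x (2 * e + i) := by
          intro i hi
          have r1 := REL i hi
          rw [show n + i = 2 * e + i by omega, show 2 * n + i = (e + i) + 3 * e by omega] at r1
          rw [hpe3] at r1
          exact r1.symm
        have step2 : ∀ r, r < 3 * e → x (r + e) = x r := by
          intro r hr
          rcases le_or_gt e r with h' | h'
          · have := step1 (r - e) (by omega)
            rw [show e + (r - e) = r by omega, show 2 * e + (r - e) = r + e by omega] at this
            exact this.symm
          · have a1 := step1 r (by omega)
            have a2 := step1 (r + e) (by omega)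
            rw [show e + r = r + e by ring, show 2 * e + r = r + 2 * e by ring] at a1
            rw [show e + (r + e) = r + 2 * e by ring, show 2 * e + (r + e) = r + 3 * e by ring] at a2
            rw [a1, a2, hpe3]
        intro t
        have e1 : x (t + e) = x (t % (3 * e) + e) := per_add_red hpe3 t e
        have e2 : x t = x (t % (3 * e)) := per_val_mod hpe3 t
        rw [e1, e2, step2 _ (Nat.mod_lt _ h3epos)]
      · -- k ≥ 4 : we show x has period n, in particular period e·k ⇒ u = v via n ∣ n.
        -- we prove period n here and use e ∣ n? Simpler: period n suffices for final goal,
        -- so we prove the final contradiction right here.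
        have hk4 : 4 ≤ k := by omega
        have h3e_le : 3 * e ≤ n := by
          have h4 : e * 4 ≤ e * k := Nat.mul_le_mul_left _ (by omega)
          omega
        have hC : ∀ t, x (t + n) = x t := by
          intro t
          have hrlt : t % (3 * e) < 3 * e := Nat.mod_lt _ h3epos
          obtain ⟨m, hm1, hm2⟩ := exists_rep (3 * e) (t % (3 * e)) n h3epos hrlt
          set s := t % (3 * e) + 3 * e * m with hs
          have hi : s - n < n := by omega
          have hrel := REL (s - n) hi
          rw [show n + (s - n) = s by omega, show 2 * n + (s - n) = s + n by omega] at hrel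
          have e1 : x s = x (t % (3 * e)) := per_mul hpe3 m (t % (3 * e))
          have e2 : x t = x (t % (3 * e)) := per_val_mod hpe3 t
          have e3 : x (t + n) = x (t % (3 * e) + n) := per_add_red hpe3 t n
          have e4 : x (s + n) = x (t % (3 * e) + n) := by
            rw [show s + n = (t % (3 * e) + n) + 3 * e * m by rw [hs]; ring]
            exact per_mul hpe3 _ _
          rw [e3, ← e4, ← hrel, e1, e2]
        exfalso
        exact huv (eq_of_period_dvd hn u v dvd_rfl hC)
    exact huv (eq_of_period_dvd hn u v ⟨k, hne⟩ hper_e)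

private lemma windows_eq_mod (huv : u ≠ v) {a b : ℕ}
    (h : ∀ s, s < 3 * n → xw n hn u v (a + s) = xw n hn u v (b + s)) :
    a % (3 * n) = b % (3 * n) := by
  set x := xw n hn u v with hx
  have hp3 : ∀ t, x (t + 3 * n) = x t := xw_period hn u v
  have h3npos : 0 < 3 * n := by omega
  have hfull : ∀ a' b', (∀ s, s < 3 * n → x (a' + s) = x (b' + s)) → ∀ s, x (a' + s) = x (b' + s) := by
    intro a' b' h' s
    have e1 : x (a' + s) = x (a' + s % (3 * n)) := by
      conv_lhs => rw [← Nat.mod_add_div s (3 * n)]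
      rw [show a' + (s % (3 * n) + 3 * n * (s / (3 * n))) = (a' + s % (3 * n)) + 3 * n * (s / (3 * n)) by ring]
      exact per_mul hp3 _ _
    have e2 : x (b' + s) = x (b' + s % (3 * n)) := by
      conv_lhs => rw [← Nat.mod_add_div s (3 * n)]
      rw [show b' + (s % (3 * n) + 3 * n * (s / (3 * n))) = (b' + s % (3 * n)) + 3 * n * (s / (3 * n)) by ring]
      exact per_mul hp3 _ _
    rw [e1, e2, h' _ (Nat.mod_lt _ h3npos)]
  have main : ∀ a' b', a' ≤ b' → (∀ s, x (a' + s) = x (b' + s)) → a' % (3 * n) = b' % (3 * n) := by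
    intro a' b' hab hf
    set δ := b' - a' with hδdef
    have hper : ∀ t, x (t + δ) = x t := by
      intro t
      rcases le_or_gt a' t with h' | h'
      · have := hf (t - a')
        rw [show a' + (t - a') = t by omega, show b' + (t - a') = t + δ by omega] at this
        exact this.symm
      · have hle : a' ≤ t + 3 * n * a' := by
          have : a' ≤ 3 * n * a' := Nat.le_mul_of_pos_left a' h3npos
          omega
        have h1 : x (t + δ) = x (t + 3 * n * a' + δ) := by
          rw [show t + 3 * n * a' + δ = (t + δ) + 3 * n * a' by ring]
          exact (per_mul hp3 a' (t + δ)).symm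
        have h2 : x t = x (t + 3 * n * a') := (per_mul hp3 a' t).symm
        have h3 := hf (t + 3 * n * a' - a')
        rw [show a' + (t + 3 * n * a' - a') = t + 3 * n * a' by omega,
            show b' + (t + 3 * n * a' - a') = t + 3 * n * a' + δ by omega] at h3
        rw [h1, ← h3, ← h2]
    rcases Nat.eq_zero_or_pos δ with h0 | hδpos
    · have : a' = b' := by omega
      rw [this]
    · by_cases hdv : 3 * n ∣ δ
      · obtain ⟨m, hm⟩ := hdv
        have hb : b' = a' + 3 * n * m := by omega
        rw [hb, Nat.add_mul_mod_self_left]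
      · exfalso
        set g := Nat.gcd δ (3 * n) with hg
        have hpg : ∀ t, x (t + g) = x t := per_gcd δ (3 * n) hper hp3
        have hgpos : 0 < g := Nat.gcd_pos_of_pos_left _ hδpos
        have hglt : g < 3 * n := by
          rcases lt_or_eq_of_le (Nat.le_of_dvd h3npos (Nat.gcd_dvd_right δ (3 * n))) with h' | h'
          · exact h'
          · exfalso; exact hdv (h' ▸ Nat.gcd_dvd_left δ (3 * n))
        exact no_small_period hn u v huv hgpos hglt hpg
  rcases le_total a b with hab | hab
  · exact main a b hab (hfull a b h)
  · exact (main b a hab (hfull b a (fun s hs => (h s hs).symm))).symm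


end AuxStmt12core

private lemma xw_mem_Bomega {n : ℕ} (hn : 0 < n) (u v : Fin n → A) (B : Set (Fin n → A))
    (hu : u ∈ B) (hv : v ∈ B) : xw n hn u v ∈ Bomega B := by
  intro i
  have : (fun q : Fin n => xw n hn u v (i * n + (q : ℕ))) = if i % 3 = 0 then u else v := by
    funext q
    rw [xw_block hn u v i (q : ℕ) q.isLt]
  rw [this]
  split <;> assumption

private lemma wdata_block {n : ℕ} (hn : 0 < n) (u : Fin n → A) (B : Set (Fin n → A))
    (z : ℕ → ↥B) (q m : ℕ) :
    (fun s : Fin n => wdata n hn u B z q (m * n + (s : ℕ))) =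
      (if q ≤ n * m then ((z (n * m - q) : Fin n → A)) else u) := by
  funext s
  have h1 : (m * n + (s : ℕ)) / n = m := by
    rw [Nat.add_comm, Nat.add_mul_div_right _ _ hn, Nat.div_eq_of_lt s.isLt]; omega
  have h2 : (m * n + (s : ℕ)) % n = (s : ℕ) := by
    rw [Nat.add_comm, Nat.add_mul_mod_self_right, Nat.mod_eq_of_lt s.isLt]
  unfold wdata
  rw [h1]
  apply congrArg
  exact Fin.ext h2

private lemma wdata_block_mem {n : ℕ} (hn : 0 < n) (u : Fin n → A) (B : Set (Fin n → A))
    (hu : u ∈ B) (z : ℕ → ↥B) (q m : ℕ) :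
    (fun s : Fin n => wdata n hn u B z q (m * n + (s : ℕ))) ∈ B := by
  rw [wdata_block hn u B z q m]
  split
  · exact (z (n * m - q)).2
  · exact hu

private lemma qs_aligned {n : ℕ} (hn : 0 < n) (j : ℕ) :
    (j + (n - j % n) % n) % n = 0 := by
  have h1 : j % n < n := Nat.mod_lt _ hn
  have hdm := Nat.div_add_mod j n
  rcases Nat.eq_zero_or_pos (j % n) with h0 | hpos
  · rw [h0, Nat.sub_zero, Nat.mod_self, Nat.add_zero]
    exact h0
  · have h2 : (n - j % n) % n = n - j % n := Nat.mod_eq_of_lt (by omega)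
    rw [h2]
    have h3 : j + (n - j % n) = n * (j / n + 1) := by
      rw [Nat.mul_add, Nat.mul_one]; omega
    rw [h3, Nat.mul_mod_right]

private lemma witness_mem {n : ℕ} (hn : 0 < n) (u v : Fin n → A) (B : Set (Fin n → A))
    (hu : u ∈ B) (z : ℕ → ↥B) : witness n hn u v B z ∈ PsiSet n hn u v B := by
  intro i
  refine ⟨i, ?_, ?_⟩
  · intro r q
    show witness n hn u v B z (i + (r : ℕ)) _ = _
    unfold witness
    rw [if_pos (show ((⟨(q : ℕ), by have := q.isLt; omega⟩ : Fin (4 * n)) : ℕ) < 3 * n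
      from q.isLt)]
  · intro q
    have hdm := Nat.div_add_mod (i + (q : ℕ)) n
    refine ⟨fun s : Fin n => wdata n hn u B z (q : ℕ) (((i + (q : ℕ)) / n) * n + (s : ℕ)),
      ?_, ?_⟩
    · have : ((i + (q : ℕ)) / n) * n = n * ((i + (q : ℕ)) / n) := by ring
      exact this ▸ wdata_block_mem hn u B hu z (q : ℕ) ((i + (q : ℕ)) / n)
    · intro r hr
      show witness n hn u v B z (i + r) _ = _
      unfold witness
      rw [if_neg (show ¬ ((⟨3 * n + (q : ℕ), by have := q.isLt; omega⟩ : Fin (4 * n)) : ℕ)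
        < 3 * n by simp)]
      show wdata n hn u B z (3 * n + (q : ℕ) - 3 * n) (i + r + (3 * n + (q : ℕ) - 3 * n)) =
        wdata n hn u B z (q : ℕ) (((i + (q : ℕ)) / n) * n + ((i + (q : ℕ)) % n + r))
      have e1 : 3 * n + (q : ℕ) - 3 * n = (q : ℕ) := by omega
      rw [e1]
      congr 1
      have hmul : ((i + (q : ℕ)) / n) * n = n * ((i + (q : ℕ)) / n) := by ring
      omega


private lemma phiF_witness {n : ℕ} (hn : 0 < n) (u v : Fin n → A) (B : Set (Fin n → A))
    (hu : u ∈ B) (huv : u ≠ v) (z : ℕ → ↥B) :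
    phiF n hn u v B hu (witness n hn u v B z) = z := by
  funext j
  show decF n hn u v B hu (fun r : Fin (n + 2) => witness n hn u v B z (j + (r : ℕ))) = z j
  set W : Fin (n + 2) → Fin (4 * n) → A :=
    fun r => witness n hn u v B z (j + (r : ℕ)) with hW
  have hwin : ∀ q : Fin (3 * n),
      W 0 ⟨(q : ℕ), by have := q.isLt; omega⟩ = xw n hn u v (j + (q : ℕ)) := by
    intro q
    show witness n hn u v B z (j + ((0 : Fin (n + 2)) : ℕ)) _ = _
    unfold witness
    rw [if_pos (show ((⟨(q : ℕ), by have := q.isLt; omega⟩ : Fin (4 * n)) : ℕ) < 3 * n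
      from q.isLt)]
    norm_num
  have h : ∃ t : ℕ, ∀ q : Fin (3 * n),
      W 0 ⟨(q : ℕ), by have := q.isLt; omega⟩ = xw n hn u v (t + (q : ℕ)) := ⟨j, hwin⟩
  unfold decF
  rw [dif_pos h]
  have hs := h.choose_spec
  have hmod3 : h.choose % (3 * n) = j % (3 * n) := by
    refine windows_eq_mod hn u v huv (fun s hlt => ?_)
    have e1 := hs ⟨s, hlt⟩
    have e2 := hwin ⟨s, hlt⟩
    exact e1.symm.trans e2
  have hmodn : h.choose % n = j % n := by
    have d1 : h.choose % (3 * n) % n = h.choose % n :=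
      Nat.mod_mod_of_dvd _ ⟨3, by ring⟩
    have d2 : j % (3 * n) % n = j % n := Nat.mod_mod_of_dvd _ ⟨3, by ring⟩
    rw [← d1, hmod3, d2]
  have hqeq : (n - h.choose % n) % n = (n - j % n) % n := by rw [hmodn]
  have key : (fun r : Fin n => W ⟨(r : ℕ), by have := r.isLt; omega⟩
      ⟨3 * n + (n - h.choose % n) % n,
        by have := Nat.mod_lt (n - h.choose % n) hn; omega⟩)
      = ((z j : Fin n → A)) := by
    funext r
    show witness n hn u v B z (j + (r : ℕ)) _ = _
    unfold witness
    rw [if_neg (show ¬ ((⟨3 * n + (n - h.choose % n) % n,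
      by have := Nat.mod_lt (n - h.choose % n) hn; omega⟩ : Fin (4 * n)) : ℕ) < 3 * n by simp)]
    show wdata n hn u B z (3 * n + (n - h.choose % n) % n - 3 * n)
        (j + (r : ℕ) + (3 * n + (n - h.choose % n) % n - 3 * n)) = _
    have e1 : 3 * n + (n - h.choose % n) % n - 3 * n = (n - j % n) % n := by omega
    rw [e1]
    set qs := (n - j % n) % n with hqs
    have hqslt : qs < n := Nat.mod_lt _ hn
    have hal : (j + qs) % n = 0 := qs_aligned hn j
    have hdm := Nat.div_add_mod (j + qs) n
    have hnd : n * ((j + qs) / n) = j + qs := by omega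
    have harg : j + (r : ℕ) + qs = n * ((j + qs) / n) + (r : ℕ) := by omega
    rw [harg]
    unfold wdata
    have hp_div : (n * ((j + qs) / n) + (r : ℕ)) / n = (j + qs) / n := by
      rw [Nat.mul_add_div hn, Nat.div_eq_of_lt r.isLt, Nat.add_zero]
    have hp_mod : (n * ((j + qs) / n) + (r : ℕ)) % n = (r : ℕ) := by
      rw [Nat.mul_add_mod, Nat.mod_eq_of_lt r.isLt]
    rw [hp_div]
    rw [if_pos (show qs ≤ n * ((j + qs) / n) by omega)]
    have hz : n * ((j + qs) / n) - qs = j := by omega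
    rw [hz]
    apply congrArg
    exact Fin.ext hp_mod
  have hb : (fun r : Fin n => W ⟨(r : ℕ), by have := r.isLt; omega⟩
      ⟨3 * n + (n - h.choose % n) % n,
        by have := Nat.mod_lt (n - h.choose % n) hn; omega⟩) ∈ B := by
    rw [key]; exact (z j).2
  rw [dif_pos hb]
  exact Subtype.ext key


private lemma psi_proj {n : ℕ} (hn : 0 < n) (u v : Fin n → A) (B : Set (Fin n → A))
    (hu : u ∈ B) (hv : v ∈ B) (huv : u ≠ v) :
    projAll (PsiSet n hn u v B) ⊆ ⋃ m : ℕ, shiftN^[m] '' Bomega B := by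
  intro y hy
  simp only [projAll, Set.mem_iUnion, Set.mem_image] at hy
  obtain ⟨q, ψ, hψ, rfl⟩ := hy
  obtain ⟨c, hcl0, hdata0⟩ := hψ 0
  have T : ∀ i t, (∀ q' : Fin (3 * n), ψ (i + ((0 : Fin (n + 2)) : ℕ))
        ⟨(q' : ℕ), by have := q'.isLt; omega⟩ = xw n hn u v (t + ((0 : Fin (n+2)) : ℕ) + (q' : ℕ)))
      → t % (3 * n) = (c + i) % (3 * n) := by
    intro i
    induction i with
    | zero =>
      intro t ht
      refine windows_eq_mod hn u v huv (fun s hlt => ?_)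
      have e1 := ht ⟨s, hlt⟩
      have e2 := hcl0 0 ⟨s, hlt⟩
      simp only [Fin.val_zero, Nat.add_zero] at e1 e2 ⊢
      exact e1.symm.trans e2
    | succ i ih =>
      intro t ht
      obtain ⟨ti, hcli, _⟩ := hψ i
      have h0 : ti % (3 * n) = (c + i) % (3 * n) := ih ti (fun q' => hcli 0 q')
      have h1 : t % (3 * n) = (ti + 1) % (3 * n) := by
        refine windows_eq_mod hn u v huv (fun s hlt => ?_)
        have e1 := ht ⟨s, hlt⟩
        have e2 := hcli ⟨1, by omega⟩ ⟨s, hlt⟩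
        simp only [Fin.val_zero, Nat.add_zero] at e1
        exact e1.symm.trans e2
      have hfin : c + i + 1 = c + (i + 1) := by omega
      rw [h1, Nat.add_mod ti 1, h0, ← Nat.add_mod, hfin]
  have CF : ∀ i, ∀ q' : Fin (3 * n), ψ i ⟨(q' : ℕ), by have := q'.isLt; omega⟩
      = xw n hn u v (c + i + (q' : ℕ)) := by
    intro i q'
    obtain ⟨ti, hcli, _⟩ := hψ i
    have h0 : ti % (3 * n) = (c + i) % (3 * n) := T i ti (fun q'' => hcli 0 q'')
    have e1 := hcli 0 q'
    simp only [Fin.val_zero, Nat.add_zero] at e1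
    rw [e1]
    have p3 := xw_period hn u v
    calc xw n hn u v (ti + (q' : ℕ))
        = xw n hn u v (ti % (3 * n) + (q' : ℕ)) := per_add_red p3 ti (q' : ℕ)
      _ = xw n hn u v ((c + i) % (3 * n) + (q' : ℕ)) := by rw [h0]
      _ = xw n hn u v (c + i + (q' : ℕ)) := (per_add_red p3 (c + i) (q' : ℕ)).symm
  rcases lt_or_ge (q : ℕ) (3 * n) with hq3 | hq3
  · -- clock track
    refine Set.mem_iUnion.2 ⟨c + (q : ℕ), xw n hn u v, xw_mem_Bomega hn u v B hu hv, ?_⟩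
    rw [shiftN_iter]
    funext j
    show xw n hn u v (j + (c + (q : ℕ))) = ψ j q
    have hcf := CF j ⟨(q : ℕ), hq3⟩
    have hfe : (⟨((⟨(q : ℕ), hq3⟩ : Fin (3 * n)) : ℕ), by have := q.isLt; omega⟩ : Fin (4 * n)) = q :=
      Fin.ext rfl
    rw [hfe] at hcf
    rw [hcf]
    exact congrArg _ (by ring)
  · -- data track
    have hq'lt : (q : ℕ) - 3 * n < n := by have := q.isLt; omega
    set q' := (q : ℕ) - 3 * n with hq'def
    obtain ⟨b0, hb0B, hb0⟩ := hdata0 ⟨q', hq'lt⟩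
    set cq := c + q' with hcq
    have hmlt : cq % n < n := Nat.mod_lt _ hn
    have hdmc := Nat.div_add_mod cq n
    set yq : ℕ → A := fun p =>
      if _ : cq ≤ p then ψ (p - cq) ⟨3 * n + q', by omega⟩
      else if h2 : cq - cq % n ≤ p then b0 ⟨p - (cq - cq % n), by omega⟩
      else u ⟨p % n, Nat.mod_lt _ hn⟩ with hyq
    have hyqB : yq ∈ Bomega B := by
      intro m
      have hnd : n * (cq / n) = cq - cq % n := by omega
      rcases lt_trichotomy m (cq / n) with hmd | hmd | hmd
      · have hblk : (fun s : Fin n => yq (m * n + (s : ℕ))) = u := by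
          funext s
          have e0 : (m + 1) * n = m * n + n := Nat.succ_mul m n
          have e1 : (m + 1) * n ≤ (cq / n) * n := Nat.mul_le_mul_right n (by omega)
          have e2 : (cq / n) * n = n * (cq / n) := by ring
          have hlt1 : m * n + (s : ℕ) < cq - cq % n := by have := s.isLt; omega
          simp only [hyq]
          rw [dif_neg (by omega), dif_neg (by omega)]
          apply congrArg
          apply Fin.ext
          show (m * n + (s : ℕ)) % n = (s : ℕ)
          rw [Nat.add_comm, Nat.add_mul_mod_self_right, Nat.mod_eq_of_lt s.isLt]
        rw [hblk]; exact hu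
      · have hblk : (fun s : Fin n => yq (m * n + (s : ℕ))) = b0 := by
          funext s
          have hnd' : m * n = cq - cq % n := by rw [hmd, Nat.mul_comm]; omega
          have hp1 : cq - cq % n ≤ m * n + (s : ℕ) := by omega
          simp only [hyq]
          by_cases hc : cq ≤ m * n + (s : ℕ)
          · rw [dif_pos hc]
            have hrlt : m * n + (s : ℕ) - cq < n - cq % n := by
              have := s.isLt
              omega
            have e4 : m * n + (s : ℕ) - cq = 0 + (m * n + (s : ℕ) - cq) :=
              (Nat.zero_add _).symm
            rw [e4]
            have e5 : c + ((⟨q', hq'lt⟩ : Fin n) : ℕ) = cq := rfl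
            refine (hb0 (m * n + (s : ℕ) - cq)
              (by rw [e5]; exact hrlt : m * n + (s : ℕ) - cq
                < n - (c + ((⟨q', hq'lt⟩ : Fin n) : ℕ)) % n)).trans
              (congrArg b0 (Fin.ext ?_))
            show (c + ((⟨q', hq'lt⟩ : Fin n) : ℕ)) % n + (m * n + (s : ℕ) - cq) = (s : ℕ)
            rw [e5]
            omega
          · rw [dif_neg hc, dif_pos hp1]
            apply congrArg
            apply Fin.ext
            show m * n + (s : ℕ) - (cq - cq % n) = (s : ℕ)
            omega
        rw [hblk]; exact hb0B
      · have e0 : (cq / n + 1) * n = (cq / n) * n + n := Nat.succ_mul _ n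
        have e1 : (cq / n + 1) * n ≤ m * n := Nat.mul_le_mul_right n (by omega)
        have e2 : (cq / n) * n = n * (cq / n) := by ring
        have hge : cq ≤ m * n := by omega
        obtain ⟨tj, hclj, hdataj⟩ := hψ (m * n - cq)
        have hTj : tj % (3 * n) = (c + (m * n - cq)) % (3 * n) :=
          T (m * n - cq) tj (fun q'' => hclj 0 q'')
        have htjn : tj % n = (c + (m * n - cq)) % n := by
          have d1 : tj % (3 * n) % n = tj % n := Nat.mod_mod_of_dvd _ ⟨3, by ring⟩
          have d2 : (c + (m * n - cq)) % (3 * n) % n = (c + (m * n - cq)) % n :=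
            Nat.mod_mod_of_dvd _ ⟨3, by ring⟩
          rw [← d1, hTj, d2]
        have hkey : (tj + q') % n = 0 := by
          rw [Nat.add_mod, htjn, ← Nat.add_mod]
          have e3 : c + (m * n - cq) + q' = m * n := by omega
          rw [e3]
          exact Nat.mul_mod_left m n
        obtain ⟨b', hb'B, hb'⟩ := hdataj ⟨q', hq'lt⟩
        have hblk : (fun s : Fin n => yq (m * n + (s : ℕ))) = b' := by
          funext s
          have hc : cq ≤ m * n + (s : ℕ) := by omega
          simp only [hyq]
          rw [dif_pos hc]
          have hkey' : (tj + ((⟨q', hq'lt⟩ : Fin n) : ℕ)) % n = 0 := hkey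
          have hrlt : (s : ℕ) < n - (tj + ((⟨q', hq'lt⟩ : Fin n) : ℕ)) % n := by
            rw [hkey']
            have := s.isLt
            omega
          have e4 : m * n + (s : ℕ) - cq = m * n - cq + (s : ℕ) := by omega
          rw [e4]
          refine (hb' (s : ℕ) hrlt).trans (congrArg b' (Fin.ext ?_))
          show (tj + ((⟨q', hq'lt⟩ : Fin n) : ℕ)) % n + (s : ℕ) = (s : ℕ)
          rw [hkey']
          exact Nat.zero_add _
        rw [hblk]; exact hb'B
    refine Set.mem_iUnion.2 ⟨cq, yq, hyqB, ?_⟩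
    rw [shiftN_iter]
    funext j
    show yq (j + cq) = ψ j q
    simp only [hyq]
    rw [dif_pos (show cq ≤ j + cq by omega)]
    have e1 : j + cq - cq = j := by omega
    rw [e1]
    apply congrArg
    apply Fin.ext
    show 3 * n + q' = (q : ℕ)
    omega

/-- For `B ⊆ A^n` with `|B| ≥ 2`, the full shift `B^ℕ` is a factor of some
SFT `Ψ` on the alphabet `A^{4n}` with `π(Ψ)` contained in the shift orbit of `B^ω`. -/
theorem stmt12 [Fintype A] [TopologicalSpace A] [DiscreteTopology A]
    (hA : 2 ≤ Fintype.card A) (n : ℕ) (hn : 0 < n)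
    (B : Set (Fin n → A)) (hB : 2 ≤ B.ncard) :
    ∃ Ψ : Set (ℕ → (Fin (4 * n) → A)), IsSFT Ψ ∧
      IsFactorOf (Set.univ : Set (ℕ → ↥B)) Ψ ∧
      projAll Ψ ⊆ ⋃ m : ℕ, shiftN^[m] '' Bomega B := by
  have hBfin : B.Finite := Set.toFinite B
  obtain ⟨u, hu, v, hv, huv⟩ : ∃ u ∈ B, ∃ v ∈ B, u ≠ v :=
    (Set.one_lt_ncard hBfin).1 (by omega)
  refine ⟨PsiSet n hn u v B, PsiSet_isSFT n hn u v B, ?_, psi_proj hn u v B hu hv huv⟩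
  refine ⟨phiF n hn u v B hu, ?_, ?_, ?_⟩
  · have hc : Continuous (phiF n hn u v B hu) := by
      apply continuous_pi
      intro j
      have hw : Continuous (fun ψ : ℕ → Fin (4 * n) → A =>
          (fun r : Fin (n + 2) => ψ (j + (r : ℕ)))) :=
        continuous_pi (fun r => continuous_apply _)
      exact (continuous_of_discreteTopology).comp hw
    exact hc.continuousOn
  · ext z
    simp only [Set.mem_univ, iff_true, Set.mem_image]
    exact ⟨witness n hn u v B z, witness_mem hn u v B hu z,
      phiF_witness hn u v B hu huv z⟩
  · intro ψ _
    funext j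
    show decF n hn u v B hu (fun r : Fin (n + 2) => shiftN ψ (j + (r : ℕ))) =
      decF n hn u v B hu (fun r : Fin (n + 2) => ψ (j + 1 + (r : ℕ)))
    apply congrArg
    funext r
    show ψ (j + (r : ℕ) + 1) = ψ (j + 1 + (r : ℕ))
    exact congrArg ψ (by omega)
end
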